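/- Let l₀, l₁, l₂, s > 0, h₁ ∈ ℝ, and let I ⊆ (-π/2, π/2) be an open interval. Let k : I → ℝ be differentiable with k(θ) > 0 satisfying the suspension constraint l₁ cos θ / g₁ + l₂ cos θ / g₂ + 2 l₀ cos θ = s on I, where g₁ = √(k² - 2k sin θ + 1), g₂ = √(k² + 2k sin θ + 1). Define the follower height h₂(θ) = l₂ (k + sin θ)/g₂ + 2 l₀ sin θ - l₁ (k - sin θ)/g₁ + h₁. Then at every θ ∈ I where l₁(k - sin θ)/g₁³ + l₂(k + sin θ)/g₂³ ≠ 0, h₂'(θ) = k cos θ · [ 4 l₁ l₂ /(g₁³ g₂³) + 2 l₀ ( l₂/g₂³ + l₁/g₁³ ) ] / [ l₁(k - sin θ)/g₁³ + l₂(k + sin θ)/g₂³ ]. -/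

import Mathlib

open Real

/-- Derivative of the follower height
`h₂(θ) = l₂(k+sinθ)/g₂ + 2l₀ sinθ - l₁(k-sinθ)/g₁ + h₁` along the suspension
constraint `l₁ cosθ/g₁ + l₂ cosθ/g₂ + 2l₀ cosθ = s`. -/
theorem stmt_13 (l₀ l₁ l₂ s h₁ : ℝ)
    (hl₀ : 0 < l₀) (hl₁ : 0 < l₁) (hl₂ : 0 < l₂) (hs : 0 < s)
    (a b : ℝ) (hI : Set.Ioo a b ⊆ Set.Ioo (-(π/2)) (π/2))
    (k : ℝ → ℝ)
    (hkdiff : ∀ θ ∈ Set.Ioo a b, DifferentiableAt ℝ k θ)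
    (hkpos : ∀ θ ∈ Set.Ioo a b, 0 < k θ)
    (g₁ g₂ h₂ : ℝ → ℝ)
    (hg₁ : ∀ θ : ℝ, g₁ θ = Real.sqrt ((k θ)^2 - 2 * k θ * Real.sin θ + 1))
    (hg₂ : ∀ θ : ℝ, g₂ θ = Real.sqrt ((k θ)^2 + 2 * k θ * Real.sin θ + 1))
    (hcon : ∀ θ ∈ Set.Ioo a b,
      l₁ * Real.cos θ / g₁ θ + l₂ * Real.cos θ / g₂ θ + 2 * l₀ * Real.cos θ = s)
    (hh₂ : ∀ θ : ℝ, h₂ θ = l₂ * (k θ + Real.sin θ) / g₂ θ + 2 * l₀ * Real.sin θ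
      - l₁ * (k θ - Real.sin θ) / g₁ θ + h₁) :
    ∀ θ ∈ Set.Ioo a b,
      l₁ * (k θ - Real.sin θ) / (g₁ θ)^3 + l₂ * (k θ + Real.sin θ) / (g₂ θ)^3 ≠ 0 →
      deriv h₂ θ
        = k θ * Real.cos θ
            * (4 * l₁ * l₂ / ((g₁ θ)^3 * (g₂ θ)^3)
              + 2 * l₀ * (l₂ / (g₂ θ)^3 + l₁ / (g₁ θ)^3))
          / (l₁ * (k θ - Real.sin θ) / (g₁ θ)^3
              + l₂ * (k θ + Real.sin θ) / (g₂ θ)^3) := by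
  intro θ hθ hne
  have hθI := hI hθ
  have hc : 0 < Real.cos θ := Real.cos_pos_of_mem_Ioo hθI
  have hk : 0 < k θ := hkpos θ hθ
  have hK' : HasDerivAt k (deriv k θ) θ := (hkdiff θ hθ).hasDerivAt
  have hpyth : (Real.cos θ)^2 = 1 - (Real.sin θ)^2 := by
    have h := Real.sin_sq_add_cos_sq θ; nlinarith [h]
  have hu1 : (Real.sin θ)^2 < 1 := by nlinarith
  have h1pos : 0 < (k θ)^2 - 2 * k θ * Real.sin θ + 1 := by
    nlinarith [sq_nonneg (k θ - Real.sin θ)]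
  have h2pos : 0 < (k θ)^2 + 2 * k θ * Real.sin θ + 1 := by
    nlinarith [sq_nonneg (k θ + Real.sin θ)]
  have hG1pos : 0 < g₁ θ := by rw [hg₁ θ]; exact Real.sqrt_pos.2 h1pos
  have hG2pos : 0 < g₂ θ := by rw [hg₂ θ]; exact Real.sqrt_pos.2 h2pos
  have hG1sq : (g₁ θ)^2 = (k θ)^2 - 2 * k θ * Real.sin θ + 1 := by
    rw [hg₁ θ]; exact Real.sq_sqrt h1pos.le
  have hG2sq : (g₂ θ)^2 = (k θ)^2 + 2 * k θ * Real.sin θ + 1 := by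
    rw [hg₂ θ]; exact Real.sq_sqrt h2pos.le
  -- derivatives of the radicands
  have hsq : HasDerivAt (fun t => (k t)^2) (2 * k θ * deriv k θ) θ := by
    have := hK'.pow 2
    refine this.congr_deriv (Eq.symm ?_)
    push_cast
    ring
  have hmul : HasDerivAt (fun t => 2 * k t * Real.sin t)
      (2 * deriv k θ * Real.sin θ + 2 * k θ * Real.cos θ) θ :=
    (hK'.const_mul 2).mul (Real.hasDerivAt_sin θ)
  have hin1 : HasDerivAt (fun t => (k t)^2 - 2 * k t * Real.sin t + 1)
      (2 * k θ * deriv k θ - (2 * deriv k θ * Real.sin θ + 2 * k θ * Real.cos θ)) θ :=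
    (hsq.sub hmul).add_const 1
  have hin2 : HasDerivAt (fun t => (k t)^2 + 2 * k t * Real.sin t + 1)
      (2 * k θ * deriv k θ + (2 * deriv k θ * Real.sin θ + 2 * k θ * Real.cos θ)) θ :=
    (hsq.add hmul).add_const 1
  -- derivatives of g₁, g₂
  have hg1' : HasDerivAt g₁
      ((deriv k θ * (k θ - Real.sin θ) - k θ * Real.cos θ) / g₁ θ) θ := by
    have h := hin1.sqrt h1pos.ne'
    rw [show (fun y => Real.sqrt ((k y)^2 - 2 * k y * Real.sin y + 1)) = g₁
      from (funext hg₁).symm, ← hg₁ θ] at h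
    have h0 : g₁ θ ≠ 0 := hG1pos.ne'
    convert h using 1
    field_simp
    ring
  have hg2' : HasDerivAt g₂
      ((deriv k θ * (k θ + Real.sin θ) + k θ * Real.cos θ) / g₂ θ) θ := by
    have h := hin2.sqrt h2pos.ne'
    rw [show (fun y => Real.sqrt ((k y)^2 + 2 * k y * Real.sin y + 1)) = g₂
      from (funext hg₂).symm, ← hg₂ θ] at h
    have h0 : g₂ θ ≠ 0 := hG2pos.ne'
    convert h using 1
    field_simp
    ring
  have hG1inv : g₁ θ * (g₁ θ)⁻¹ = 1 := mul_inv_cancel₀ hG1pos.ne'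
  have hG2inv : g₂ θ * (g₂ θ)⁻¹ = 1 := mul_inv_cancel₀ hG2pos.ne'
  -- derivatives of the constraint summands
  have hq1 : HasDerivAt (fun t => l₁ * Real.cos t / g₁ t)
      (l₁ * (k θ - Real.sin θ) * (1 - k θ * Real.sin θ - Real.cos θ * deriv k θ)
        / (g₁ θ)^3) θ := by
    have h := ((Real.hasDerivAt_cos θ).const_mul l₁).div hg1' hG1pos.ne'
    refine h.congr_deriv (Eq.symm ?_)
    linear_combination (Real.sin θ * l₁ / (g₁ θ)^3) * hG1sq
      + (-(l₁ * k θ / (g₁ θ)^3)) * hpyth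
      + (-(l₁ * Real.sin θ * g₁ θ * ((g₁ θ)⁻¹)^2)) * hG1inv
  have hq2 : HasDerivAt (fun t => l₂ * Real.cos t / g₂ t)
      (-(l₂ * (k θ + Real.sin θ)) * (1 + k θ * Real.sin θ + Real.cos θ * deriv k θ)
        / (g₂ θ)^3) θ := by
    have h := ((Real.hasDerivAt_cos θ).const_mul l₂).div hg2' hG2pos.ne'
    refine h.congr_deriv (Eq.symm ?_)
    linear_combination (Real.sin θ * l₂ / (g₂ θ)^3) * hG2sq
      + (l₂ * k θ / (g₂ θ)^3) * hpyth
      + (-(l₂ * Real.sin θ * g₂ θ * ((g₂ θ)⁻¹)^2)) * hG2inv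
  have hF : HasDerivAt
      (fun t => l₁ * Real.cos t / g₁ t + l₂ * Real.cos t / g₂ t + 2 * l₀ * Real.cos t)
      (l₁ * (k θ - Real.sin θ) * (1 - k θ * Real.sin θ - Real.cos θ * deriv k θ) / (g₁ θ)^3
        + -(l₂ * (k θ + Real.sin θ)) * (1 + k θ * Real.sin θ + Real.cos θ * deriv k θ) / (g₂ θ)^3
        + 2 * l₀ * -Real.sin θ) θ :=
    (hq1.add hq2).add ((Real.hasDerivAt_cos θ).const_mul (2 * l₀))
  have hF0 : HasDerivAt
      (fun t => l₁ * Real.cos t / g₁ t + l₂ * Real.cos t / g₂ t + 2 * l₀ * Real.cos t)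
      0 θ := by
    have hev : (fun t => l₁ * Real.cos t / g₁ t + l₂ * Real.cos t / g₂ t
        + 2 * l₀ * Real.cos t) =ᶠ[nhds θ] (fun _ => s) :=
      Filter.eventually_of_mem (isOpen_Ioo.mem_nhds hθ) (fun t ht => hcon t ht)
    exact (hasDerivAt_const θ s).congr_of_eventuallyEq hev
  have hD0 :
      l₁ * (k θ - Real.sin θ) * (1 - k θ * Real.sin θ - Real.cos θ * deriv k θ) / (g₁ θ)^3
        + -(l₂ * (k θ + Real.sin θ)) * (1 + k θ * Real.sin θ + Real.cos θ * deriv k θ) / (g₂ θ)^3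
        + 2 * l₀ * -Real.sin θ = 0 :=
    hF.unique hF0
  -- derivative of h₂
  have hq3 : HasDerivAt (fun t => l₂ * (k t + Real.sin t) / g₂ t)
      (l₂ * Real.cos θ * (Real.cos θ * deriv k θ + k θ * Real.sin θ + 1) / (g₂ θ)^3) θ := by
    have h := ((hK'.add (Real.hasDerivAt_sin θ)).const_mul l₂).div hg2' hG2pos.ne'
    simp only [Pi.add_apply] at h
    refine h.congr_deriv (Eq.symm ?_)
    linear_combination (-(l₂ * (deriv k θ + Real.cos θ) / (g₂ θ)^3)) * hG2sq
      + (l₂ * deriv k θ / (g₂ θ)^3) * hpyth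
      + (l₂ * (Real.cos θ + deriv k θ) * g₂ θ * ((g₂ θ)⁻¹)^2) * hG2inv
  have hq4 : HasDerivAt (fun t => l₁ * (k t - Real.sin t) / g₁ t)
      (l₁ * Real.cos θ * (Real.cos θ * deriv k θ - (1 - k θ * Real.sin θ)) / (g₁ θ)^3) θ := by
    have h := ((hK'.sub (Real.hasDerivAt_sin θ)).const_mul l₁).div hg1' hG1pos.ne'
    simp only [Pi.sub_apply] at h
    refine h.congr_deriv (Eq.symm ?_)
    linear_combination (-(l₁ * (deriv k θ - Real.cos θ) / (g₁ θ)^3)) * hG1sq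
      + (l₁ * deriv k θ / (g₁ θ)^3) * hpyth
      + (-(l₁ * (Real.cos θ - deriv k θ) * g₁ θ * ((g₁ θ)⁻¹)^2)) * hG1inv
  have hE : HasDerivAt h₂
      (l₂ * Real.cos θ * (Real.cos θ * deriv k θ + k θ * Real.sin θ + 1) / (g₂ θ)^3
        + 2 * l₀ * Real.cos θ
        - l₁ * Real.cos θ * (Real.cos θ * deriv k θ - (1 - k θ * Real.sin θ)) / (g₁ θ)^3) θ := by
    rw [funext hh₂]
    exact ((hq3.add ((Real.hasDerivAt_sin θ).const_mul (2 * l₀))).sub hq4).add_const h₁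
  rw [hE.deriv, eq_div_iff hne]
  linear_combination
    (-(Real.cos θ * (l₂ / (g₂ θ)^3 - l₁ / (g₁ θ)^3))) * hD0
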